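/- (Negative part of qΔ⁻¹r·B.) Let B = ∑_{j=0}^{d} M_{a_j} ∘ Δ^j be a difference operator and q, r : ℤ → k functions. Write B*(r) := ∑_{j=0}^{d} (Δ*)^j(a_j · r) for the pointwise application of the formal adjoint B* = ∑_j (Δ*)^j ∘ M_{a_j} to r, where Δ* = Λ⁻¹ − 1. Then there exists a difference operator P such that, as linear operators on V: M_q ∘ Δ⁻¹ ∘ M_r ∘ B = P + M_q ∘ Δ⁻¹ ∘ M_{B*(r)}. -/

import Mathlib

open Finset

namespace CdKP

variable {k : Type*} [Field k]

/-- Shift operator: `(Λ f) n = f (n+1)`. -/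
def Lam (f : ℤ → k) : ℤ → k := fun n => f (n + 1)

/-- Inverse shift operator: `(Λ⁻¹ f) n = f (n-1)`. -/
def LamInv (f : ℤ → k) : ℤ → k := fun n => f (n - 1)

/-- Difference operator `Δ = Λ - 1`. -/
def Dlt (f : ℤ → k) : ℤ → k := fun n => f (n + 1) - f n

/-- Formal adjoint difference operator `Δ* = Λ⁻¹ - 1`. -/
def DltStar (f : ℤ → k) : ℤ → k := fun n => f (n - 1) - f n

/-- Inverse of `Δ` on `V`: `(Δ⁻¹ f) n = -∑_{m ≥ n} f m`. -/
noncomputable def Dinv (f : ℤ → k) : ℤ → k := fun n => -∑ᶠ m ∈ Set.Ici n, f m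

/-- Membership in `V`: `f n = 0` for all sufficiently large `n`. -/
def InV (f : ℤ → k) : Prop := ∃ N : ℤ, ∀ n ≥ N, f n = 0

/-- Multiplication operator `M_g`: `(M_g f) n = g n * f n`. -/
def Mul (g f : ℤ → k) : ℤ → k := fun n => g n * f n

/-- Pointwise inverse of a function. -/
def pinv (r : ℤ → k) : ℤ → k := fun n => (r n)⁻¹

/-- A difference operator: a finite sum `∑_{j=0}^{d} M_{a_j} ∘ Δ^j`. -/
def IsDiffOp (P : (ℤ → k) → ℤ → k) : Prop :=
  ∃ (d : ℕ) (a : ℕ → ℤ → k),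
    ∀ (f : ℤ → k) (n : ℤ), P f n = ∑ j ∈ Finset.range (d + 1), a j n * Dlt^[j] f n

lemma dinv_eq_Ico {f : ℤ → k} {N : ℤ} (h : ∀ m ≥ N, f m = 0) (n : ℤ) :
    Dinv f n = -∑ m ∈ Finset.Ico n N, f m := by
  unfold Dinv
  congr 1
  apply finsum_mem_eq_sum_of_subset
  · rintro m ⟨hm, hm'⟩
    simp only [Set.mem_Ici] at hm
    simp only [Finset.coe_Ico, Set.mem_Ico]
    refine ⟨hm, ?_⟩
    by_contra hc
    exact hm' (h m (by omega))
  · intro m hm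
    simp only [Finset.coe_Ico, Set.mem_Ico] at hm
    exact hm.1

lemma telescope (h : ℤ → k) {n N : ℤ} (hnN : n ≤ N) :
    ∑ m ∈ Finset.Ico n N, (h (m + 1) - h m) = h N - h n := by
  obtain ⟨t, rfl⟩ : ∃ t : ℕ, N = n + t := ⟨(N - n).toNat, by omega⟩
  clear hnN
  induction t with
  | zero => simp
  | succ t ih =>
    have h1 : (n + (t + 1 : ℕ) : ℤ) = (n + t) + 1 := by push_cast; ring
    have h2 : Finset.Ico n ((n + t : ℤ) + 1) = insert (n + (t : ℤ)) (Finset.Ico n (n + t)) := by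
      ext x; simp only [Finset.mem_Ico, Finset.mem_insert]; omega
    rw [h1, h2, Finset.sum_insert (by simp), ih]
    ring

lemma inV_dlt {f : ℤ → k} (h : InV f) : InV (Dlt f) := by
  obtain ⟨N, hN⟩ := h
  exact ⟨N, fun n hn => by simp [Dlt, hN n hn, hN (n + 1) (by omega)]⟩

lemma inV_dlt_iter {f : ℤ → k} (h : InV f) (j : ℕ) : InV (Dlt^[j] f) := by
  induction j with
  | zero => simpa
  | succ j ih => rw [Function.iterate_succ_apply']; exact inV_dlt ih

lemma inV_mul (g : ℤ → k) {f : ℤ → k} (h : InV f) : InV (Mul g f) := by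
  obtain ⟨N, hN⟩ := h
  exact ⟨N, fun n hn => by simp [Mul, hN n hn]⟩

lemma abel_step (g : ℤ → k) {f : ℤ → k} {N : ℤ} (hf : ∀ m ≥ N, f m = 0) (n : ℤ) :
    Dinv (Mul g (Dlt f)) n = Dinv (Mul (DltStar g) f) n + g (n - 1) * f n := by
  have hDf : ∀ m ≥ N, Mul g (Dlt f) m = 0 := fun m hm => by
    simp [Mul, Dlt, hf m hm, hf (m + 1) (by omega)]
  have h2 : ∀ m ≥ N, Mul (DltStar g) f m = 0 := fun m hm => by simp [Mul, hf m hm]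
  rw [dinv_eq_Ico hDf n, dinv_eq_Ico h2 n]
  rcases le_or_gt n N with hn | hn
  · have tele := telescope (fun m => g (m - 1) * f m) hn
    have key : ∑ m ∈ Finset.Ico n N, Mul g (Dlt f) m
        - ∑ m ∈ Finset.Ico n N, Mul (DltStar g) f m
        = g (N - 1) * f N - g (n - 1) * f n := by
      rw [← Finset.sum_sub_distrib, ← tele]
      apply Finset.sum_congr rfl
      intro m _
      have hmm : m + 1 - 1 = m := by ring
      simp only [Mul, Dlt, DltStar, hmm]
      ring
    have hfN : f N = 0 := hf N le_rfl
    rw [hfN, mul_zero, zero_sub] at key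
    linear_combination -key
  · have he : Finset.Ico n N = ∅ := Finset.Ico_eq_empty (by omega)
    rw [he, hf n (by omega)]
    simp

lemma abel_iter (j : ℕ) (g : ℤ → k) {f : ℤ → k} (hf : InV f) (n : ℤ) :
    Dinv (Mul g (Dlt^[j] f)) n = Dinv (Mul (DltStar^[j] g) f) n
      + ∑ i ∈ Finset.range j, DltStar^[i] g (n - 1) * Dlt^[j - 1 - i] f n := by
  induction j generalizing f with
  | zero => simp
  | succ j ih =>
    obtain ⟨N, hN⟩ := id hf
    rw [Function.iterate_succ_apply, ih (inV_dlt hf)]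
    rw [abel_step (DltStar^[j] g) hN n, ← Function.iterate_succ_apply' DltStar]
    rw [Finset.sum_range_succ]
    have hterm : ∀ i ∈ Finset.range j,
        DltStar^[i] g (n - 1) * Dlt^[j - 1 - i] (Dlt f) n
          = DltStar^[i] g (n - 1) * Dlt^[j + 1 - 1 - i] f n := by
      intro i hi
      simp only [Finset.mem_range] at hi
      rw [show j + 1 - 1 - i = (j - 1 - i) + 1 by omega, Function.iterate_succ_apply]
    rw [Finset.sum_congr rfl hterm]
    simp only [Function.iterate_zero, id_eq, Nat.add_sub_cancel, Nat.sub_self]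
    ring

lemma dinv_add {f g : ℤ → k} (hf : InV f) (hg : InV g) (n : ℤ) :
    Dinv (fun m => f m + g m) n = Dinv f n + Dinv g n := by
  obtain ⟨N1, h1⟩ := hf
  obtain ⟨N2, h2⟩ := hg
  have hs : ∀ m ≥ max N1 N2, f m + g m = 0 := fun m hm => by
    rw [h1 m (le_trans (le_max_left _ _) hm), h2 m (le_trans (le_max_right _ _) hm)]; ring
  rw [dinv_eq_Ico hs n, dinv_eq_Ico (fun m hm => h1 m (le_trans (le_max_left N1 N2) hm)) n,
    dinv_eq_Ico (fun m hm => h2 m (le_trans (le_max_right N1 N2) hm)) n,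
    Finset.sum_add_distrib]
  ring

lemma dinv_zero (n : ℤ) : Dinv (fun _ => (0 : k)) n = 0 := by
  simp [Dinv]

lemma inV_sum {ι : Type*} (s : Finset ι) (F : ι → ℤ → k) (h : ∀ j ∈ s, InV (F j)) :
    InV (fun m => ∑ j ∈ s, F j m) := by
  classical
  induction s using Finset.induction with
  | empty => exact ⟨0, fun n _ => by simp⟩
  | insert x s hx ih =>
    obtain ⟨N1, h1⟩ := h x (Finset.mem_insert_self x s)
    obtain ⟨N2, h2⟩ := ih (fun j hj => h j (Finset.mem_insert_of_mem hj))
    refine ⟨max N1 N2, fun n hn => ?_⟩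
    show ∑ j ∈ insert x s, F j n = 0
    rw [Finset.sum_insert hx, h1 n (le_trans (le_max_left _ _) hn)]
    have := h2 n (le_trans (le_max_right _ _) hn)
    simp only at this
    rw [this]
    ring

lemma dinv_sum {ι : Type*} (s : Finset ι) (F : ι → ℤ → k) (h : ∀ j ∈ s, InV (F j)) (n : ℤ) :
    Dinv (fun m => ∑ j ∈ s, F j m) n = ∑ j ∈ s, Dinv (F j) n := by
  classical
  induction s using Finset.induction with
  | empty => simpa using dinv_zero n
  | insert x s hx ih =>
    have e : (fun m => ∑ j ∈ insert x s, F j m)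
        = fun m => F x m + ∑ j ∈ s, F j m := by
      funext m; rw [Finset.sum_insert hx]
    rw [e, dinv_add (h x (Finset.mem_insert_self x s))
        (inV_sum s F fun j hj => h j (Finset.mem_insert_of_mem hj)) n,
      ih (fun j hj => h j (Finset.mem_insert_of_mem hj)), Finset.sum_insert hx]

/-- Negative part of `M_q ∘ Δ⁻¹ ∘ M_r ∘ B`: there is a difference operator `P` with
`M_q ∘ Δ⁻¹ ∘ M_r ∘ B = P + M_q ∘ Δ⁻¹ ∘ M_{B*(r)}` on `V`,
where `B*(r) = ∑_j (Δ*)^j (a_j · r)`. -/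
theorem dinv_mul_diffOp {k : Type*} [Field k] (d : ℕ) (a : ℕ → ℤ → k) (q r : ℤ → k) :
    ∃ P : (ℤ → k) → ℤ → k, IsDiffOp P ∧
      ∀ f : ℤ → k, InV f → ∀ n : ℤ,
        Mul q (Dinv (Mul r
            (fun m => ∑ j ∈ Finset.range (d + 1), a j m * Dlt^[j] f m))) n =
          P f n +
            q n * Dinv (Mul
              (fun m => ∑ j ∈ Finset.range (d + 1), DltStar^[j] (Mul (a j) r) m) f) n := by
  classical
  set c : ℕ → ℤ → k := fun t n => q n * ∑ j ∈ Finset.range (d + 1), ∑ i ∈ Finset.range j,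
    if j - 1 - i = t then DltStar^[i] (Mul (a j) r) (n - 1) else 0 with hc
  refine ⟨fun f n => ∑ t ∈ Finset.range (d + 1), c t n * Dlt^[t] f n,
    ⟨d, c, fun f n => rfl⟩, fun f hf n => ?_⟩
  -- P f n equals the explicit double sum
  have hP : ∑ t ∈ Finset.range (d + 1), c t n * Dlt^[t] f n
      = q n * ∑ j ∈ Finset.range (d + 1), ∑ i ∈ Finset.range j,
          DltStar^[i] (Mul (a j) r) (n - 1) * Dlt^[j - 1 - i] f n := by
    simp only [hc, Finset.sum_mul, ite_mul, zero_mul, mul_assoc]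
    rw [← Finset.mul_sum]
    congr 1
    rw [Finset.sum_comm]
    refine Finset.sum_congr rfl fun j hj => ?_
    rw [Finset.sum_comm]
    refine Finset.sum_congr rfl fun i hi => ?_
    rw [Finset.sum_ite_eq (Finset.range (d + 1)) (j - 1 - i)
      (fun t => DltStar^[i] (Mul (a j) r) (n - 1) * Dlt^[t] f n)]
    rw [if_pos]
    simp only [Finset.mem_range] at hj hi ⊢
    omega
  have hMulV : ∀ j, InV (Mul (Mul (a j) r) (Dlt^[j] f)) :=
    fun j => inV_mul _ (inV_dlt_iter hf j)
  have e1 : Mul r (fun m => ∑ j ∈ Finset.range (d + 1), a j m * Dlt^[j] f m)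
      = fun m => ∑ j ∈ Finset.range (d + 1), Mul (Mul (a j) r) (Dlt^[j] f) m := by
    funext m
    simp only [Mul, Finset.mul_sum]
    exact Finset.sum_congr rfl fun j _ => by ring
  have e2 : Mul (fun m => ∑ j ∈ Finset.range (d + 1), DltStar^[j] (Mul (a j) r) m) f
      = fun m => ∑ j ∈ Finset.range (d + 1), Mul (DltStar^[j] (Mul (a j) r)) f m := by
    funext m; simp only [Mul, Finset.sum_mul]
  show q n * Dinv (Mul r (fun m => ∑ j ∈ Finset.range (d + 1), a j m * Dlt^[j] f m)) n = _
  rw [e1, dinv_sum _ _ (fun j _ => hMulV j) n,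
    Finset.sum_congr rfl (fun j (_ : j ∈ Finset.range (d + 1)) =>
      abel_iter j (Mul (a j) r) hf n),
    Finset.sum_add_distrib, mul_add, e2, dinv_sum _ _ (fun j _ => inV_mul _ hf) n]
  linear_combination -hP

end CdKP
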